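/- Let X and Y be k-heights of a finite graph G with X ≠ Y, and suppose the set S := {v ∈ V : X(v) < Y(v)} is nonempty. Then there exists a vertex v₀ ∈ S such that incrementing X at v₀ by 1 yields a valid k-height. Consequently there exists a k-height X' differing from X on exactly one vertex, with distance δ(X',Y) = δ(X,Y) − 1, where δ(X,Y) := Σ_{v∈V} |X(v) − Y(v)|. -/
import Mathlib


def IsKHeight {V : Type*} (G : SimpleGraph V) (k : ℕ) (φ : V → ℕ) : Prop :=
  (∀ v, φ v ≤ k) ∧ ∀ ⦃v w : V⦄, G.Adj v w → |(φ v : ℤ) - (φ w : ℤ)| ≤ 1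

/-- The distance `δ(X,Y) = Σ_v |X v − Y v|` between two height functions. -/
def heightDist {V : Type*} [Fintype V] (X Y : V → ℕ) : ℕ :=
  ∑ v : V, ((X v : ℤ) - (Y v : ℤ)).natAbs

/-- If `X ≠ Y` are `k`-heights and `S = {v | X v < Y v}` is nonempty, then there
is `v₀ ∈ S` such that incrementing `X` at `v₀` yields a valid `k`-height;
the resulting `k`-height `X'` differs from `X` exactly at `v₀` and satisfies
`δ(X',Y) = δ(X,Y) − 1`. -/
theorem exists_increment_step {V : Type*} [Fintype V] [DecidableEq V]
    (G : SimpleGraph V) (k : ℕ) (X Y : V → ℕ)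
    (hX : IsKHeight G k X) (hY : IsKHeight G k Y) (hne : X ≠ Y)
    (hS : ∃ v, X v < Y v) :
    ∃ v₀, X v₀ < Y v₀ ∧
      IsKHeight G k (Function.update X v₀ (X v₀ + 1)) ∧
      heightDist (Function.update X v₀ (X v₀ + 1)) Y = heightDist X Y - 1 := by
  classical
  obtain ⟨v, hv⟩ := hS
  obtain ⟨v₀, hv₀S, hmin⟩ := Finset.exists_min_image
    (Finset.univ.filter fun w => X w < Y w) X
    ⟨v, by simp [hv]⟩
  simp only [Finset.mem_filter, Finset.mem_univ, true_and] at hv₀S hmin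
  -- no neighbor of v₀ has smaller X value
  have hnb : ∀ w, G.Adj v₀ w → X v₀ ≤ X w := by
    intro w hadj
    by_contra hlt
    push_neg at hlt
    have h1 := hX.2 hadj
    have h2 := hY.2 hadj
    have hwS : X w < Y w := by
      rw [abs_le] at h1 h2; omega
    exact absurd (hmin w hwS) (by omega)
  refine ⟨v₀, hv₀S, ⟨?_, ?_⟩, ?_⟩
  · intro u
    rcases eq_or_ne u v₀ with rfl | hu
    · rw [Function.update_self]
      have := hY.1 u
      omega
    · rw [Function.update_of_ne hu]; exact hX.1 u
  · intro u w hadj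
    have h1 := hX.2 hadj
    rw [abs_le] at h1 ⊢
    rcases eq_or_ne u v₀ with rfl | hu
    · have hw : w ≠ u := fun h => G.irrefl (h ▸ hadj)
      rw [Function.update_self, Function.update_of_ne hw]
      have := hnb w hadj
      push_cast
      omega
    · rw [Function.update_of_ne hu]
      rcases eq_or_ne w v₀ with rfl | hw
      · rw [Function.update_self]
        have := hnb u hadj.symm
        push_cast
        omega
      · rw [Function.update_of_ne hw]; omega
  · unfold heightDist
    rw [← Finset.sum_erase_add _ _ (Finset.mem_univ v₀),
        ← Finset.sum_erase_add _ _ (Finset.mem_univ v₀)]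
    have hA : ∑ w ∈ Finset.univ.erase v₀,
        ((Function.update X v₀ (X v₀ + 1) w : ℤ) - (Y w : ℤ)).natAbs
        = ∑ w ∈ Finset.univ.erase v₀, ((X w : ℤ) - (Y w : ℤ)).natAbs := by
      refine Finset.sum_congr rfl fun w hw => ?_
      rw [Function.update_of_ne (Finset.ne_of_mem_erase hw)]
    rw [hA, Function.update_self]
    have h1 : (((X v₀ : ℤ) + 1) - (Y v₀ : ℤ)).natAbs
        = ((X v₀ : ℤ) - (Y v₀ : ℤ)).natAbs - 1 := by
      omega
    push_cast
    omega
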